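/- arXiv:1706.00190 — 2 statements merged into one kernel-verified Lean document; each statement's English description precedes it below -/
import Mathlib

section
/- Let 𝒟 be a dyadic grid on ℝⁿ, let α ∈ (0,1], γ = α/(2(2n+α)), and fix an integer r ≥ 1. Let I, J ∈ 𝒟 and let K ∈ 𝒟 be good, with ℓ(K) ≤ ℓ(I) = 2ℓ(J) and max(d(K,I), d(K,J)) > ℓ(K)^γ ℓ(J)^{1−γ}. Then there exists a cube Q ∈ 𝒟 such that I ∪ J ∪ K ⊂ Q and max(d(K,I), d(K,J)) ≥ c ℓ(K)^γ ℓ(Q)^{1−γ}, where c = c(n,r,γ) > 0. -/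
open MeasureTheory Set
open scoped ENNReal NNReal Classical

noncomputable section

namespace Bilinear

/-- Points of `ℝⁿ`, equipped with the `ℓ^∞` (sup) metric. -/
abbrev E (n : ℕ) : Type := Fin n → ℝ

/-- An axis-parallel cube in `ℝⁿ`, described by its lower corner and its side length. -/
structure Cube (n : ℕ) where
  corner : Fin n → ℝ
  side : ℝ
  side_pos : 0 < side

namespace Cube

variable {n : ℕ}

/-- The (half-open) cube as a subset of `ℝⁿ`. -/
def set (Q : Cube n) : Set (E n) :=
  {x | ∀ i, Q.corner i ≤ x i ∧ x i < Q.corner i + Q.side}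

/-- The closed cube as a subset of `ℝⁿ`. -/
def clSet (Q : Cube n) : Set (E n) :=
  {x | ∀ i, Q.corner i ≤ x i ∧ x i ≤ Q.corner i + Q.side}

/-- The volume `|Q| = ℓ(Q)ⁿ` of a cube. -/
def vol (Q : Cube n) : ℝ := Q.side ^ n

/-- The center of a cube. -/
def center (Q : Cube n) : E n := fun i => Q.corner i + Q.side / 2

/-- The concentric dilate `cQ` of a cube (defined for `c ≥ 1`; junk otherwise). -/
def dilate (Q : Cube n) (c : ℝ) : Cube n where
  corner := fun i => Q.corner i + Q.side / 2 - max c 1 * Q.side / 2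
  side := max c 1 * Q.side
  side_pos := mul_pos (lt_of_lt_of_le one_pos (le_max_right c 1)) Q.side_pos

end Cube

/-- The (`ℓ^∞`) distance between two sets of `ℝⁿ`. -/
def setDist {n : ℕ} (s t : Set (E n)) : ℝ := sInf (Set.image2 dist s t)

/-- The (`ℓ^∞`) distance between two cubes. -/
def cubeDist {n : ℕ} (Q R : Cube n) : ℝ := setDist Q.clSet R.clSet

/-- The indicator function `1_Q` of a cube, as a complex-valued function. -/
def indC {n : ℕ} (Q : Cube n) : E n → ℂ := fun x => if x ∈ Q.set then 1 else 0

/-- The average `⟨|f|⟩_Q` of `|f|` over a cube. -/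
def avgAbs {n : ℕ} (Q : Cube n) (f : E n → ℂ) : ℝ := Q.vol⁻¹ * ∫ x in Q.set, ‖f x‖

/-- The average `⟨f⟩_Q` of `f` over a cube. -/
def avg {n : ℕ} (Q : Cube n) (f : E n → ℂ) : ℂ := (Q.vol : ℂ)⁻¹ * ∫ x in Q.set, f x

/-- The `L^p` norm (`p` a real exponent) of `f : ℝⁿ → ℂ`. -/
def lpNorm {n : ℕ} (f : E n → ℂ) (p : ℝ) : ℝ := (eLpNorm f (ENNReal.ofReal p) volume).toReal

/-- `f` is bounded, measurable and compactly supported. -/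
def BddCompactSupp {n : ℕ} (f : E n → ℂ) : Prop :=
  Measurable f ∧ HasCompactSupport f ∧ ∃ M : ℝ, ∀ x, ‖f x‖ ≤ M

/-- The pairing `⟨f, g⟩ = ∫ f g`. -/
def pairing {n : ℕ} (f g : E n → ℂ) : ℂ := ∫ x, f x * g x

/-! ### Random dyadic grids -/

/-- The translation `Σ_{j : 2^{-j} < 2^{-k}} 2^{-j} ω^j` of the grid of scale `2^{-k}`. -/
def gridShift {n : ℕ} (ω : ℤ → Fin n → Bool) (k : ℤ) (i : Fin n) : ℝ :=
  ∑' j : {j : ℤ // k < j}, (2 : ℝ) ^ (-(j.1)) * (if ω j.1 i then 1 else 0)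

/-- The shifted dyadic grid `𝒟_ω = {I + ω : I ∈ 𝒟₀}`. -/
def dyadicGrid {n : ℕ} (ω : ℤ → Fin n → Bool) : Set (Cube n) :=
  {Q | ∃ (k : ℤ) (m : Fin n → ℤ), Q.side = (2 : ℝ) ^ (-k) ∧
    ∀ i, Q.corner i = (m i : ℝ) * (2 : ℝ) ^ (-k) + gridShift ω k i}

/-- A dyadic grid is a translate-type grid `𝒟_ω` of the standard grid. -/
def IsDyadicGrid {n : ℕ} (𝒟 : Set (Cube n)) : Prop := ∃ ω, 𝒟 = dyadicGrid ω

/-- A grid has no quadrants if every strictly increasing chain of cubes exhausts `ℝⁿ`;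
equivalently, every cube of the grid and every point are contained in a common bigger
grid cube. -/
def NoQuadrants {n : ℕ} (𝒟 : Set (Cube n)) : Prop :=
  ∀ Q ∈ 𝒟, ∀ x : E n, ∃ R ∈ 𝒟, Q.set ⊆ R.set ∧ x ∈ R.set

/-- A cube `I` of a grid `𝒟` is good (with parameters `r, γ`) if for every `J ∈ 𝒟` with
`ℓ(J) ≥ 2^r ℓ(I)` one has `d(I, ∂J) > ℓ(I)^γ ℓ(J)^(1-γ)`. -/
def IsGood {n : ℕ} (𝒟 : Set (Cube n)) (r : ℕ) (γ : ℝ) (I : Cube n) : Prop :=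
  ∀ J ∈ 𝒟, (2 : ℝ) ^ r * I.side ≤ J.side →
    I.side ^ γ * J.side ^ (1 - γ) < setDist I.clSet (frontier J.set)

/-! ### Haar functions -/

/-- One-dimensional Haar functions on the interval `[a, a+l)`:
noncancellative (`e = false`) and cancellative (`e = true`). -/
def haar1 (a l : ℝ) (e : Bool) (t : ℝ) : ℝ :=
  if a ≤ t ∧ t < a + l then
    if e then (if t < a + l / 2 then l ^ (-(1 : ℝ) / 2) else -(l ^ (-(1 : ℝ) / 2)))
    else l ^ (-(1 : ℝ) / 2)
  else 0

/-- The Haar function `h_Q^η` of a cube `Q ⊂ ℝⁿ`. It is cancellative iff `η ≠ 0`. -/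
def haar {n : ℕ} (Q : Cube n) (η : Fin n → Bool) : E n → ℝ :=
  fun x => ∏ i, haar1 (Q.corner i) Q.side (η i) (x i)

/-- The pairing `⟨f, h_Q^η⟩`. -/
def haarPairing {n : ℕ} (f : E n → ℂ) (Q : Cube n) (η : Fin n → Bool) : ℂ :=
  ∫ x, f x * (haar Q η x : ℂ)

/-! ### Bilinear Calderón–Zygmund kernels and truncated operators -/


/-- `K` is a (measurable) standard bilinear Calderón–Zygmund kernel on `ℝⁿ` with Hölder
exponent `α` and constant `C`: size bound and Hölder bounds in each of the three
variables, away from the diagonal `Δ = {x = y = z}`. -/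
def CZBounds (n : ℕ) (α : ℝ) (K : E n → E n → E n → ℂ) (C : ℝ) : Prop :=
  Measurable (fun p : E n × E n × E n => K p.1 p.2.1 p.2.2) ∧
  (∀ x y z : E n, ¬(x = y ∧ y = z) →
    ‖K x y z‖ ≤ C / (dist x y + dist x z) ^ (2 * n)) ∧
  (∀ x x' y z : E n, ¬(x = y ∧ y = z) → ¬(x' = y ∧ y = z) →
    dist x x' ≤ max (dist x y) (dist x z) / 2 →
    ‖K x y z - K x' y z‖ ≤ C * dist x x' ^ α / (dist x y + dist x z) ^ (2 * (n : ℝ) + α)) ∧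
  (∀ x y y' z : E n, ¬(x = y ∧ y = z) → ¬(x = y' ∧ y' = z) →
    dist y y' ≤ max (dist x y) (dist x z) / 2 →
    ‖K x y z - K x y' z‖ ≤ C * dist y y' ^ α / (dist x y + dist x z) ^ (2 * (n : ℝ) + α)) ∧
  (∀ x y z z' : E n, ¬(x = y ∧ y = z) → ¬(x = y ∧ y = z') →
    dist z z' ≤ max (dist x y) (dist x z) / 2 →
    ‖K x y z - K x y z'‖ ≤ C * dist z z' ^ α / (dist x y + dist x z) ^ (2 * (n : ℝ) + α))

/-- The truncated bilinear singular integral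
`T_ε(f,g)(x) = ∬_{max(|x-y|,|x-z|) > ε} K(x,y,z) f(y) g(z) dy dz`. -/
def truncT {n : ℕ} (K : E n → E n → E n → ℂ) (ε : ℝ) (f g : E n → ℂ) (x : E n) : ℂ :=
  ∫ y, ∫ z, if ε < max (dist x y) (dist x z) then K x y z * f y * g z else 0

/-- The class `𝒜` of smooth truncation profiles: smooth `φ` with values in `[0,1]`,
vanishing on `[0,1/2]`, equal to `1` on `[1,∞)`, and `‖φ'‖_∞ ≤ 10`. -/
def memA (φ : ℝ → ℝ) : Prop :=
  ContDiff ℝ (⊤ : ℕ∞) φ ∧ (∀ t, φ t ∈ Set.Icc (0 : ℝ) 1) ∧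
    (∀ t ≤ (1 : ℝ) / 2, φ t = 0) ∧ (∀ t, (1 : ℝ) ≤ t → φ t = 1) ∧ ∀ t, |deriv φ t| ≤ 10

/-- The smoothly truncated kernel `K_ε^φ(x,y,z) = K(x,y,z) φ((|x-y|+|x-z|)/ε)`. -/
def smoothK {n : ℕ} (K : E n → E n → E n → ℂ) (φ : ℝ → ℝ) (ε : ℝ) :
    E n → E n → E n → ℂ :=
  fun x y z => K x y z * ((φ ((dist x y + dist x z) / ε) : ℝ) : ℂ)

/-- The smoothly truncated operator `T_ε^φ(f,g)(x) = ∬ K_ε^φ(x,y,z) f(y) g(z) dy dz`. -/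
def smoothT {n : ℕ} (K : E n → E n → E n → ℂ) (φ : ℝ → ℝ) (ε : ℝ) (f g : E n → ℂ)
    (x : E n) : ℂ :=
  ∫ y, ∫ z, smoothK K φ ε x y z * f y * g z

/-- The first adjoint kernel, `K^{1*}(x,y,z) = K(y,x,z)`. -/
def adj1 {n : ℕ} (K : E n → E n → E n → ℂ) : E n → E n → E n → ℂ := fun x y z => K y x z

/-- The second adjoint kernel, `K^{2*}(x,y,z) = K(z,y,x)`. -/
def adj2 {n : ℕ} (K : E n → E n → E n → ℂ) : E n → E n → E n → ℂ := fun x y z => K z y x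

/-- `C` is a weak boundedness constant of the bilinear operator `T`:
`|⟨T(1_I,1_I), 1_I⟩| ≤ C |I|` for all cubes `I ⊂ ℝⁿ`. -/
def WBPBound {n : ℕ} (T : (E n → ℂ) → (E n → ℂ) → E n → ℂ) (C : ℝ) : Prop :=
  ∀ Q : Cube n, ‖∫ x in Q.set, T (indC Q) (indC Q) x‖ ≤ C * Q.vol

/-! ### The `BMO` pairings `⟨T_ε(1,1), φ₀⟩` and testing conditions -/

/-- The pairing `⟨T_ε(1,1), φ₀⟩`, defined (for `φ₀` supported in the cube `R`, with mean
zero, and `c ≥ 3` a dilation factor) as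
`⟨T_ε(1_{cR},1_{cR}), φ₀⟩ + ∭ (K(x,y,z) - K(c_R,y,z)) 1_{(cR×cR)ᶜ}(y,z) φ₀(x) dy dz dx`. -/
def bmoPairing {n : ℕ} (K : E n → E n → E n → ℂ) (ε : ℝ) (φ₀ : E n → ℂ) (R : Cube n)
    (c : ℝ) : ℂ :=
  (∫ x, truncT K ε (indC (R.dilate c)) (indC (R.dilate c)) x * φ₀ x) +
    ∫ x, φ₀ x * ∫ y, ∫ z,
      if y ∈ (R.dilate c).set ∧ z ∈ (R.dilate c).set then 0
      else K x y z - K R.center y z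

/-- The pairing `⟨T_ε^{1*}(1,1), φ₀⟩ = ⟨T_ε(φ₀, 1_{cR}), 1_{cR}⟩ + (correction with K^{1*})`. -/
def bmoPairing1 {n : ℕ} (K : E n → E n → E n → ℂ) (ε : ℝ) (φ₀ : E n → ℂ) (R : Cube n)
    (c : ℝ) : ℂ :=
  (∫ x, truncT K ε φ₀ (indC (R.dilate c)) x * indC (R.dilate c) x) +
    ∫ x, φ₀ x * ∫ y, ∫ z,
      if y ∈ (R.dilate c).set ∧ z ∈ (R.dilate c).set then 0
      else adj1 K x y z - adj1 K R.center y z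

/-- The pairing `⟨T_ε^{2*}(1,1), φ₀⟩ = ⟨T_ε(1_{cR}, φ₀), 1_{cR}⟩ + (correction with K^{2*})`. -/
def bmoPairing2 {n : ℕ} (K : E n → E n → E n → ℂ) (ε : ℝ) (φ₀ : E n → ℂ) (R : Cube n)
    (c : ℝ) : ℂ :=
  (∫ x, truncT K ε (indC (R.dilate c)) φ₀ x * indC (R.dilate c) x) +
    ∫ x, φ₀ x * ∫ y, ∫ z,
      if y ∈ (R.dilate c).set ∧ z ∈ (R.dilate c).set then 0
      else adj2 K x y z - adj2 K R.center y z

/-- `B` is an admissible `BMO` bound for `T_ε(1,1)`: `|⟨T_ε(1,1), φ₀⟩| ≤ B |R|`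
over all admissible testing data. -/
def BMOBound {n : ℕ} (K : E n → E n → E n → ℂ) (ε : ℝ) (B : ℝ) : Prop :=
  ∀ (R : Cube n) (φ₀ : E n → ℂ), Measurable φ₀ → Function.support φ₀ ⊆ R.clSet →
    (∀ x, ‖φ₀ x‖ ≤ 1) → (∫ x, φ₀ x) = 0 →
    ∀ c : ℝ, 3 ≤ c → ε < 2⁻¹ * (c - 1) * R.side →
      ‖bmoPairing K ε φ₀ R c‖ ≤ B * R.vol

/-- `B` is an admissible `BMO` bound for `T_ε^{1*}(1,1)`. -/
def BMOBound1 {n : ℕ} (K : E n → E n → E n → ℂ) (ε : ℝ) (B : ℝ) : Prop :=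
  ∀ (R : Cube n) (φ₀ : E n → ℂ), Measurable φ₀ → Function.support φ₀ ⊆ R.clSet →
    (∀ x, ‖φ₀ x‖ ≤ 1) → (∫ x, φ₀ x) = 0 →
    ∀ c : ℝ, 3 ≤ c → ε < 2⁻¹ * (c - 1) * R.side →
      ‖bmoPairing1 K ε φ₀ R c‖ ≤ B * R.vol

/-- `B` is an admissible `BMO` bound for `T_ε^{2*}(1,1)`. -/
def BMOBound2 {n : ℕ} (K : E n → E n → E n → ℂ) (ε : ℝ) (B : ℝ) : Prop :=
  ∀ (R : Cube n) (φ₀ : E n → ℂ), Measurable φ₀ → Function.support φ₀ ⊆ R.clSet →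
    (∀ x, ‖φ₀ x‖ ≤ 1) → (∫ x, φ₀ x) = 0 →
    ∀ c : ℝ, 3 ≤ c → ε < 2⁻¹ * (c - 1) * R.side →
      ‖bmoPairing2 K ε φ₀ R c‖ ≤ B * R.vol

/-! ### Sparse collections -/

/-- A collection `𝒮` of cubes is `η`-sparse: every `Q ∈ 𝒮` carries a major measurable
subset `E_Q ⊆ Q` with `|E_Q| > η |Q|`, the sets `E_Q` being pairwise disjoint. -/
def IsSparse {n : ℕ} (η : ℝ) (𝒮 : Set (Cube n)) : Prop :=
  ∃ Esel : Cube n → Set (E n),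
    (∀ Q ∈ 𝒮, MeasurableSet (Esel Q) ∧ Esel Q ⊆ Q.set ∧
      ENNReal.ofReal (η * Q.vol) < MeasureTheory.volume (Esel Q)) ∧
    𝒮.Pairwise fun Q R => Disjoint (Esel Q) (Esel R)

/-- The sparse form `Λ_𝒮(f₁,f₂,f₃) = Σ_{Q ∈ 𝒮} |Q| ⟨|f₁|⟩_Q ⟨|f₂|⟩_Q ⟨|f₃|⟩_Q`. -/
def sparseForm {n : ℕ} (𝒮 : Set (Cube n)) (f₁ f₂ f₃ : E n → ℂ) : ℝ :=
  ∑' Q : 𝒮, (Q : Cube n).vol * avgAbs Q f₁ * avgAbs Q f₂ * avgAbs Q f₃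

/-! ### Bilinear dyadic shifts and paraproducts, as trilinear forms -/

/-- A trilinear form on functions on `ℝⁿ`. -/
abbrev TriForm (n : ℕ) : Type := (E n → ℂ) → (E n → ℂ) → (E n → ℂ) → ℂ

/-- The index set of a bilinear dyadic shift of complexity `(i,j,k)` in the grid `𝒟`:
tuples of cubes `I, J, K ⊆ Q` of `𝒟` with `ℓ(I) = 2^{-i} ℓ(Q)`, `ℓ(J) = 2^{-j} ℓ(Q)`,
`ℓ(K) = 2^{-k} ℓ(Q)`, together with Haar signatures, `h_K` being cancellative and at most
one of `h_I, h_J` being noncancellative. -/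
structure ShiftIndex (n : ℕ) (𝒟 : Set (Cube n)) (i j k : ℕ) where
  Q : Cube n
  I : Cube n
  J : Cube n
  K : Cube n
  ηf : Fin n → Bool
  ηg : Fin n → Bool
  ηh : Fin n → Bool
  memQ : Q ∈ 𝒟
  memI : I ∈ 𝒟
  memJ : J ∈ 𝒟
  memK : K ∈ 𝒟
  subI : I.set ⊆ Q.set
  subJ : J.set ⊆ Q.set
  subK : K.set ⊆ Q.set
  sideI : I.side = Q.side / 2 ^ i
  sideJ : J.side = Q.side / 2 ^ j
  sideK : K.side = Q.side / 2 ^ k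
  cancel_h : ηh ≠ fun _ => false
  cancel_fg : ¬(ηf = (fun _ => false) ∧ ηg = (fun _ => false))

/-- `Λ` is (the trilinear form of) a cancellative bilinear dyadic shift of complexity
`(i,j,k)` in the grid `𝒟`: `Λ(f,g,h) = Σ α_{I,J,K,Q} ⟨f, h̃_I⟩ ⟨g, h̃_J⟩ ⟨h, h_K⟩`
with `|α_{I,J,K,Q}| ≤ |I|^{1/2} |J|^{1/2} |K|^{1/2} / |Q|²`. -/
def IsShiftForm {n : ℕ} (𝒟 : Set (Cube n)) (i j k : ℕ) (Λ : TriForm n) : Prop :=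
  ∃ α : ShiftIndex n 𝒟 i j k → ℂ,
    (∀ t, ‖α t‖ ≤ Real.sqrt (t.I.vol * t.J.vol * t.K.vol) / t.Q.vol ^ 2) ∧
    ∀ f g h, Λ f g h =
      ∑' t : ShiftIndex n 𝒟 i j k,
        α t * haarPairing f t.I t.ηf * haarPairing g t.J t.ηg * haarPairing h t.K t.ηh

/-- `Λ` is a cancellative bilinear shift of complexity `(i,i,k)` or `(i,i+1,k)` in `𝒟`,
or an adjoint (`⟨S^{1*}(f,g),h⟩ = ⟨S(h,g),f⟩`, `⟨S^{2*}(f,g),h⟩ = ⟨S(f,h),g⟩`) of such. -/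
def IsExtShiftForm {n : ℕ} (𝒟 : Set (Cube n)) (i k : ℕ) (Λ : TriForm n) : Prop :=
  ∃ Λ₀ : TriForm n, (IsShiftForm 𝒟 i i k Λ₀ ∨ IsShiftForm 𝒟 i (i + 1) k Λ₀) ∧
    ((∀ f g h, Λ f g h = Λ₀ f g h) ∨ (∀ f g h, Λ f g h = Λ₀ h g f) ∨
      (∀ f g h, Λ f g h = Λ₀ f h g))

/-- The index set of a bilinear paraproduct in the grid `𝒟`: cubes `K ∈ 𝒟` with a
cancellative Haar signature. -/
structure ParaIndex (n : ℕ) (𝒟 : Set (Cube n)) where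
  K : Cube n
  η : Fin n → Bool
  mem : K ∈ 𝒟
  cancel : η ≠ fun _ => false

/-- `Λ` is (the trilinear form of) a bilinear paraproduct
`Π_β(f,g) = Σ_K β_K ⟨f⟩_K ⟨g⟩_K h_K` in the grid `𝒟`, with coefficients satisfying the
Carleson normalization `Σ_{K ⊆ K₀} |β_K|² ≤ |K₀|` for all `K₀ ∈ 𝒟`. -/
def IsParaForm {n : ℕ} (𝒟 : Set (Cube n)) (Λ : TriForm n) : Prop :=
  ∃ β : ParaIndex n 𝒟 → ℂ,
    (∀ K₀ ∈ 𝒟, (∑' t : {t : ParaIndex n 𝒟 // t.K.set ⊆ K₀.set},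
        ((‖β t.1‖₊ : ℝ≥0∞) ^ 2)) ≤ ENNReal.ofReal K₀.vol) ∧
    ∀ f g h, Λ f g h =
      ∑' t : ParaIndex n 𝒟, β t * avg t.K f * avg t.K g * haarPairing h t.K t.η

/-! ### Auxiliary lemmas for Statement 4 -/

section AuxStatement4

variable {n : ℕ}

private lemma two_zpow_pos' (k : ℤ) : (0:ℝ) < 2 ^ k := zpow_pos (by norm_num) k

private lemma two_zpow_pred (k : ℤ) : (2:ℝ) ^ (-(k-1)) = 2 * 2 ^ (-k) := by
  rw [show -(k-1) = -k + 1 by ring, zpow_add₀ (two_ne_zero) (-k) 1, zpow_one]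
  ring

private lemma shift_summable (ω : ℤ → Fin n → Bool) (i : Fin n) (k : ℤ) :
    Summable (fun m : ℕ => (2:ℝ) ^ (-(k + (m:ℤ))) * (if ω (k + (m:ℤ)) i then 1 else 0)) := by
  refine Summable.of_nonneg_of_le (fun m => by positivity) (fun m => ?_)
    (summable_geometric_two.mul_left ((2:ℝ)^(-k)))
  have h1 : (2:ℝ) ^ (-(k + (m:ℤ))) = (2:ℝ)^(-k) * (1/2:ℝ)^m := by
    rw [neg_add, zpow_add₀ (two_ne_zero : (2:ℝ) ≠ 0)]
    congr 1
    rw [zpow_neg, zpow_natCast, one_div, inv_pow]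
  rw [h1]
  exact mul_le_of_le_one_right (by positivity) (by split <;> norm_num)

private def shiftEquiv' (k : ℤ) : ℕ ≃ {j : ℤ // k < j} where
  toFun m := ⟨k + 1 + m, by omega⟩
  invFun j := (j.1 - (k + 1)).toNat
  left_inv m := by simp
  right_inv j := Subtype.ext (by have := j.2; simp; omega)

private lemma gridShift_eq_nat (ω : ℤ → Fin n → Bool) (k : ℤ) (i : Fin n) :
    gridShift ω k i
      = ∑' m : ℕ, (2:ℝ) ^ (-(k + 1 + (m:ℤ))) * (if ω (k + 1 + (m:ℤ)) i then 1 else 0) := by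
  rw [gridShift]
  exact ((shiftEquiv' k).tsum_eq
    (fun j : {j : ℤ // k < j} => (2:ℝ) ^ (-(j.1)) * (if ω j.1 i then 1 else 0))).symm

private lemma gridShift_step (ω : ℤ → Fin n → Bool) (k : ℤ) (i : Fin n) :
    gridShift ω (k - 1) i = (2:ℝ)^(-k) * (if ω k i then 1 else 0) + gridShift ω k i := by
  rw [gridShift_eq_nat ω (k-1) i, gridShift_eq_nat ω k i]
  calc ∑' m : ℕ, (2:ℝ)^(-(k-1+1+(m:ℤ))) * (if ω (k-1+1+(m:ℤ)) i then 1 else 0)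
      = ∑' m : ℕ, (2:ℝ)^(-(k+(m:ℤ))) * (if ω (k+(m:ℤ)) i then 1 else 0) :=
        tsum_congr fun m => by rw [show k-1+1+(m:ℤ) = k+(m:ℤ) by ring]
    _ = (2:ℝ)^(-(k+((0:ℕ):ℤ))) * (if ω (k+((0:ℕ):ℤ)) i then 1 else 0)
        + ∑' m : ℕ, (2:ℝ)^(-(k+((m+1:ℕ):ℤ))) * (if ω (k+((m+1:ℕ):ℤ)) i then 1 else 0) :=
        Summable.tsum_eq_zero_add (shift_summable ω i k)
    _ = (2:ℝ)^(-k) * (if ω k i then 1 else 0) + ∑' m : ℕ,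
          (2:ℝ)^(-(k+1+(m:ℤ))) * (if ω (k+1+(m:ℤ)) i then 1 else 0) := by
        congr 1
        · norm_num
        · exact tsum_congr fun m => by
            rw [show k + ((m+1:ℕ):ℤ) = k + 1 + (m:ℤ) by push_cast; ring]

private lemma gridShift_sub (ω : ℤ → Fin n → Bool) (i : Fin n) (d : ℕ) :
    ∀ k : ℤ, ∃ q : ℤ, gridShift ω (k - (d:ℤ)) i - gridShift ω k i = (q:ℝ) * 2^(-k) := by
  induction d with
  | zero => exact fun k => ⟨0, by simp⟩
  | succ d ih =>
    intro k
    obtain ⟨q, hq⟩ := ih (k - 1)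
    set b : ℤ := if ω k i then 1 else 0 with hb
    have e2 := gridShift_step ω k i
    have e4 : ((if ω k i then (1:ℝ) else 0)) = (b:ℝ) := by rw [hb]; split <;> simp
    rw [e4] at e2
    have e3 : (2:ℝ)^(-(k-1)) = 2 * 2^(-k) := two_zpow_pred k
    refine ⟨2*q + b, ?_⟩
    have e5 : k - ((d+1:ℕ):ℤ) = (k-1) - (d:ℤ) := by push_cast; ring
    rw [e5]
    push_cast
    linear_combination hq + e2 + (q:ℝ) * e3

private lemma exists_parent (ω : ℤ → Fin n → Bool) {Q : Cube n} (hQ : Q ∈ dyadicGrid ω) :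
    ∃ P ∈ dyadicGrid ω, Q.set ⊆ P.set ∧ P.side = 2 * Q.side := by
  obtain ⟨k, m, hside, hcorner⟩ := hQ
  refine ⟨⟨fun i => (((m i - (if ω k i then 1 else 0)) / 2 : ℤ) : ℝ) * (2:ℝ)^(-(k-1))
      + gridShift ω (k-1) i, (2:ℝ)^(-(k-1)), two_zpow_pos' _⟩,
    ⟨k-1, fun i => (m i - (if ω k i then 1 else 0))/2, rfl, fun i => rfl⟩, ?_, ?_⟩
  · intro x hx
    simp only [Cube.set, Set.mem_setOf_eq] at hx ⊢
    intro i
    have h1 := hx i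
    rw [hside] at h1
    have h2k := two_zpow_pos' (-k)
    set b : ℤ := if ω k i then 1 else 0 with hb
    have hstep := gridShift_step ω k i
    have e4 : ((if ω k i then (1:ℝ) else 0)) = (b:ℝ) := by rw [hb]; split <;> simp
    rw [e4] at hstep
    have e3 : (2:ℝ)^(-(k-1)) = 2 * 2^(-k) := two_zpow_pred k
    have hcq : Q.corner i = (m i : ℝ) * 2^(-k) + gridShift ω k i := hcorner i
    have key : ∃ t : ℤ, (t = 0 ∨ t = -1) ∧
        (((m i - b)/2 : ℤ):ℝ) * (2:ℝ)^(-(k-1)) + gridShift ω (k-1) i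
          = Q.corner i + (t:ℝ) * 2^(-k) := by
      refine ⟨2*((m i - b)/2) + b - m i, by omega, ?_⟩
      rw [hcq, hstep, e3]
      push_cast
      ring
    obtain ⟨t, ht, hPc⟩ := key
    rw [hb] at hPc
    constructor
    · rw [hPc]
      rcases ht with h|h <;> rw [h] <;> push_cast <;> linarith [h1.1]
    · rw [hPc, e3]
      rcases ht with h|h <;> rw [h] <;> push_cast <;> linarith [h1.2]
  · rw [hside]
    exact two_zpow_pred k

private lemma exists_chain (ω : ℤ → Fin n → Bool) {K : Cube n} (hK : K ∈ dyadicGrid ω) :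
    ∃ f : ℕ → Cube n, f 0 = K ∧ (∀ m, f m ∈ dyadicGrid ω) ∧
      (∀ m, (f m).set ⊆ (f (m+1)).set) ∧ (∀ m, (f m).side = 2^m * K.side) := by
  have step : ∀ P : {Q : Cube n // Q ∈ dyadicGrid ω}, ∃ R : {Q : Cube n // Q ∈ dyadicGrid ω},
      P.1.set ⊆ R.1.set ∧ R.1.side = 2 * P.1.side := by
    rintro ⟨P, hP⟩
    obtain ⟨R, hR, h1, h2⟩ := exists_parent ω hP
    exact ⟨⟨R, hR⟩, h1, h2⟩
  choose g hg1 hg2 using step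
  let F : ℕ → {Q : Cube n // Q ∈ dyadicGrid ω} := fun m => Nat.rec ⟨K, hK⟩ (fun _ p => g p) m
  have hfs : ∀ m, (F m).1.side = 2^m * K.side := by
    intro m
    induction m with
    | zero => simp [F]
    | succ m ih =>
      have h1 : F (m+1) = g (F m) := rfl
      rw [h1, hg2, ih]
      ring
  exact ⟨fun m => (F m).1, rfl, fun m => (F m).2, fun m => hg1 _, hfs⟩

private lemma interval_cases' {a b h H : ℝ} (hh : 0 < h) (q : ℤ) (d : ℕ)
    (hq : a - b = (q:ℝ) * h) (hH : H = 2^d * h) :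
    (b ≤ a ∧ a + h ≤ b + H) ∨ (a + h ≤ b) ∨ (b + H ≤ a) := by
  rcases lt_trichotomy q 0 with hq0 | hq0 | hq0
  · refine Or.inr (Or.inl ?_)
    have : (q:ℝ) ≤ -1 := by exact_mod_cast (by omega : q ≤ -1)
    nlinarith
  · subst hq0
    left
    norm_num at hq
    have h2d : (1:ℝ) ≤ 2^d := one_le_pow₀ (by norm_num)
    constructor <;> nlinarith
  · by_cases hq2 : (2:ℤ)^d ≤ q
    · refine Or.inr (Or.inr ?_)
      have : ((2:ℤ)^d : ℝ) ≤ (q:ℝ) := by exact_mod_cast hq2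
      push_cast at this
      nlinarith
    · left
      push_neg at hq2
      have h1 : (0:ℝ) ≤ (q:ℝ) := by exact_mod_cast hq0.le
      have h2 : (q:ℝ) + 1 ≤ ((2:ℤ)^d : ℝ) := by exact_mod_cast hq2
      push_cast at h2
      constructor <;> nlinarith

private lemma subset_or_disjoint (ω : ℤ → Fin n → Bool) {P Q : Cube n}
    (hP : P ∈ dyadicGrid ω) (hQ : Q ∈ dyadicGrid ω) (hside : Q.side ≤ P.side) :
    Q.set ⊆ P.set ∨ Disjoint Q.set P.set := by
  obtain ⟨k, m, hk, hm⟩ := hQ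
  obtain ⟨k', m', hk', hm'⟩ := hP
  have hkk : k' ≤ k := by
    have h2 : (2:ℝ)^(-k) ≤ 2^(-k') := by rw [← hk, ← hk']; exact hside
    have := (zpow_le_zpow_iff_right₀ (by norm_num : (1:ℝ) < 2)).1 h2
    omega
  set d : ℕ := (k - k').toNat with hd
  have hdk : k' = k - (d:ℤ) := by omega
  have hNside : P.side = 2^d * Q.side := by
    rw [hk, hk', ← zpow_natCast (2:ℝ) d, ← zpow_add₀ (two_ne_zero : (2:ℝ) ≠ 0)]
    congr 1
    omega
  have hcorner : ∀ i, ∃ q : ℤ, Q.corner i - P.corner i = (q:ℝ) * 2^(-k) := by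
    intro i
    obtain ⟨q0, hq0⟩ := gridShift_sub ω i d k
    refine ⟨m i - m' i * 2^d - q0, ?_⟩
    rw [hm i, hm' i, hdk]
    have h2 : (2:ℝ)^(-(k - (d:ℤ))) = 2^(d:ℕ) * 2^(-k) := by
      rw [← zpow_natCast (2:ℝ) d, ← zpow_add₀ (two_ne_zero : (2:ℝ) ≠ 0)]
      congr 1
      ring
    rw [h2]
    push_cast
    linear_combination -hq0
  have tri : ∀ i, (P.corner i ≤ Q.corner i ∧ Q.corner i + Q.side ≤ P.corner i + P.side)
      ∨ (Q.corner i + Q.side ≤ P.corner i) ∨ (P.corner i + P.side ≤ Q.corner i) := by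
    intro i
    obtain ⟨q, hq⟩ := hcorner i
    have hH : P.side = 2^d * (2:ℝ)^(-k) := by rw [hNside, hk]
    have := interval_cases' (two_zpow_pos' (-k)) q d hq hH
    rw [← hk] at this
    exact this
  by_cases hall : ∀ i, P.corner i ≤ Q.corner i ∧ Q.corner i + Q.side ≤ P.corner i + P.side
  · left
    intro x hx i
    obtain ⟨h1, h2⟩ := hx i
    exact ⟨le_trans (hall i).1 h1, lt_of_lt_of_le h2 (hall i).2⟩
  · right
    obtain ⟨i, hi⟩ := not_forall.1 hall
    have h3 := (tri i).resolve_left hi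
    rw [Set.disjoint_left]
    intro x hxQ hxP
    obtain ⟨a1, a2⟩ := hxQ i
    obtain ⟨b1, b2⟩ := hxP i
    rcases h3 with h|h <;> linarith

private lemma corner_mem_set (Q : Cube n) : Q.corner ∈ Q.set :=
  fun i => ⟨le_refl _, lt_add_of_pos_right _ Q.side_pos⟩

private lemma corner_mem_clSet (Q : Cube n) : Q.corner ∈ Q.clSet :=
  fun i => ⟨le_refl _, le_add_of_nonneg_right Q.side_pos.le⟩

private lemma set_subset_clSet (Q : Cube n) : Q.set ⊆ Q.clSet :=
  fun _ hx i => ⟨(hx i).1, (hx i).2.le⟩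

private lemma clSet_subset_closure (Q : Cube n) : Q.clSet ⊆ closure Q.set := by
  intro x hx
  rw [Metric.mem_closure_iff]
  intro ε hε
  have hs0 := Q.side_pos
  set δ : ℝ := min 1 (ε / (2 * Q.side)) with hδ
  have hδ0 : 0 < δ := lt_min one_pos (div_pos hε (by linarith))
  have hδ1 : δ ≤ 1 := min_le_left _ _
  refine ⟨fun i => Q.corner i + (1 - δ) * (x i - Q.corner i), fun i => ?_, ?_⟩
  · obtain ⟨h1, h2⟩ := hx i
    have key : (1 - δ) * (x i - Q.corner i) ≤ (1 - δ) * Q.side :=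
      mul_le_mul_of_nonneg_left (by linarith) (by linarith)
    constructor
    · show Q.corner i ≤ Q.corner i + (1 - δ) * (x i - Q.corner i)
      nlinarith
    · show Q.corner i + (1 - δ) * (x i - Q.corner i) < Q.corner i + Q.side
      nlinarith [mul_pos hδ0 hs0]
  · have hb : ∀ i, dist (x i) (Q.corner i + (1 - δ) * (x i - Q.corner i)) ≤ δ * Q.side := by
      intro i
      obtain ⟨h1, h2⟩ := hx i
      rw [Real.dist_eq]
      rw [abs_le]
      have key : (1 - δ) * (x i - Q.corner i) ≤ (1 - δ) * Q.side :=
        mul_le_mul_of_nonneg_left (by linarith) (by linarith)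
      constructor <;> nlinarith [mul_pos hδ0 hs0]
    have hδs : δ * Q.side < ε := by
      have hm : δ ≤ ε / (2 * Q.side) := min_le_right _ _
      have h3 := mul_le_mul_of_nonneg_right hm hs0.le
      have heq : ε / (2*Q.side) * Q.side = ε/2 := by
        field_simp
      rw [heq] at h3
      linarith
    calc dist x (fun i => Q.corner i + (1 - δ) * (x i - Q.corner i))
        ≤ δ * Q.side := dist_pi_le_iff (by positivity) |>.2 fun i => hb i
      _ < ε := hδs

private lemma cube_setDist_nonneg (s t : Set (E n)) : 0 ≤ setDist s t :=
  Real.sInf_nonneg (by rintro x ⟨a, ha, b, hb, rfl⟩; exact dist_nonneg)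

private lemma setDist_le_dist {s t : Set (E n)} {x y : E n} (hx : x ∈ s) (hy : y ∈ t) :
    setDist s t ≤ dist x y :=
  csInf_le ⟨0, by rintro z ⟨a, ha, b, hb, rfl⟩; exact dist_nonneg⟩
    (Set.mem_image2_of_mem hx hy)

private lemma dist_le_of_mem_segment {x y z : E n} (hz : z ∈ segment ℝ x y) :
    dist x z ≤ dist x y := by
  rw [segment_eq_image'] at hz
  obtain ⟨t, ht, rfl⟩ := hz
  rw [dist_eq_norm, dist_eq_norm]
  have : x - (x + t • (y - x)) = -(t • (y - x)) := by abel
  rw [this, norm_neg, norm_smul, norm_sub_rev x y]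
  calc ‖t‖ * ‖y - x‖ ≤ 1 * ‖y - x‖ := by
        apply mul_le_mul_of_nonneg_right _ (norm_nonneg _)
        rw [Real.norm_eq_abs, abs_of_nonneg ht.1]
        exact ht.2
    _ = ‖y - x‖ := one_mul _

private lemma exists_frontier_dist {A : Set (E n)} {x y : E n}
    (hx : x ∈ closure A) (hy : y ∈ closure Aᶜ) :
    ∃ z ∈ frontier A, dist x z ≤ dist x y := by
  by_cases hx' : x ∈ closure Aᶜ
  · exact ⟨x, by rw [frontier_eq_closure_inter_closure]; exact ⟨hx, hx'⟩,
      by rw [dist_self]; exact dist_nonneg⟩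
  by_cases hy' : y ∈ closure A
  · exact ⟨y, by rw [frontier_eq_closure_inter_closure]; exact ⟨hy', hy⟩, le_refl _⟩
  have hxA : x ∈ interior A := by
    rw [closure_compl] at hx'
    simpa using hx'
  have hyA : y ∈ interior Aᶜ := by
    rw [interior_compl]
    exact hy'
  by_contra hcon
  push_neg at hcon
  have hsub : segment ℝ x y ⊆ interior A ∪ interior Aᶜ := by
    intro z hz
    by_contra hzin
    simp only [Set.mem_union, not_or] at hzin
    have h1 : z ∈ closure Aᶜ := by
      rw [closure_compl]
      exact hzin.1
    have h2 : z ∈ closure A := by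
      have := hzin.2
      rw [interior_compl] at this
      simpa using this
    have hzf : z ∈ frontier A := by
      rw [frontier_eq_closure_inter_closure]
      exact ⟨h2, h1⟩
    exact absurd (dist_le_of_mem_segment hz) (not_le.2 (hcon z hzf))
  obtain ⟨z, -, hz2⟩ := (convex_segment x y).isPreconnected _ _ isOpen_interior isOpen_interior
    hsub ⟨x, left_mem_segment ℝ x y, hxA⟩ ⟨y, right_mem_segment ℝ x y, hyA⟩
  exact (interior_subset hz2.2 : z ∈ Aᶜ) (interior_subset hz2.1)

private lemma frontier_dist_le_cubeDist {K P I : Cube n}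
    (hKP : K.set ⊆ P.set) (hdis : Disjoint I.set P.set) :
    setDist K.clSet (frontier P.set) ≤ cubeDist K I := by
  rw [cubeDist, setDist]
  apply le_csInf
  · exact ⟨dist K.corner I.corner,
      Set.mem_image2_of_mem (corner_mem_clSet K) (corner_mem_clSet I)⟩
  rintro b ⟨xx, hxx, yy, hyy, rfl⟩
  have hxc : xx ∈ closure P.set := closure_mono hKP (clSet_subset_closure K hxx)
  have hyc : yy ∈ closure P.setᶜ := by
    have hsub : I.set ⊆ P.setᶜ := fun z hz => (Set.disjoint_left.1 hdis) hz
    exact closure_mono hsub (clSet_subset_closure I hyy)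
  obtain ⟨z, hzf, hzd⟩ := exists_frontier_dist hxc hyc
  exact le_trans (setDist_le_dist hxx hzf) hzd

private lemma side_le_of_subset (hn : 0 < n) {Q R : Cube n} (h : Q.set ⊆ R.set) :
    Q.side ≤ R.side := by
  by_contra hlt
  push_neg at hlt
  set i : Fin n := ⟨0, hn⟩
  have h1 := h (corner_mem_set Q)
  set x : E n := Function.update Q.corner i (Q.corner i + R.side) with hx
  have hxQ : x ∈ Q.set := by
    intro j
    by_cases hj : j = i
    · subst hj
      rw [hx]
      simp only [Function.update_self]
      exact ⟨le_add_of_nonneg_right R.side_pos.le, by linarith⟩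
    · rw [hx]
      simp only [Function.update_of_ne hj]
      exact ⟨le_refl _, lt_add_of_pos_right _ Q.side_pos⟩
  have h2 := (h hxQ) i
  have h3 := (h1 i).1
  rw [hx] at h2
  simp only [Function.update_self] at h2
  linarith [h2.2]

private lemma rpow_fac {γ : ℝ} (hγ0 : 0 ≤ γ) (hγ1 : γ ≤ 1) {h a b C : ℝ} (hh : 0 ≤ h)
    (ha : 0 ≤ a) (hb : 0 ≤ b) (hC : 1 ≤ C) (hab : a ≤ C * b) :
    h ^ γ * a ^ (1 - γ) ≤ C * (h ^ γ * b ^ (1 - γ)) := by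
  have h1γ0 : (0:ℝ) ≤ 1 - γ := by linarith
  have h1 : a ^ (1-γ) ≤ (C*b) ^ (1-γ) := Real.rpow_le_rpow ha hab h1γ0
  have h2 : (C*b)^(1-γ) ≤ C * b^(1-γ) := by
    rw [Real.mul_rpow (by linarith) hb]
    refine mul_le_mul_of_nonneg_right ?_ (Real.rpow_nonneg hb _)
    calc C^(1-γ) ≤ C^(1:ℝ) := Real.rpow_le_rpow_of_exponent_le hC (by linarith)
      _ = C := Real.rpow_one C
  calc h^γ * a^(1-γ) ≤ h^γ * (C * b^(1-γ)) :=
        mul_le_mul_of_nonneg_left (h1.trans h2) (Real.rpow_nonneg hh _)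
    _ = C * (h^γ * b^(1-γ)) := by ring

end AuxStatement4

/-- existence of a common dyadic parent in the separated part:
if `K` is a good cube, `ℓ(K) ≤ ℓ(I) = 2ℓ(J)` and
`max(d(K,I), d(K,J)) > ℓ(K)^γ ℓ(J)^(1-γ)` with `γ = α/(2(2n+α))`, then there is a cube
`Q` of the grid containing `I ∪ J ∪ K` with
`max(d(K,I), d(K,J)) ≥ c ℓ(K)^γ ℓ(Q)^(1-γ)`, where `c = c(n,r,γ) > 0`. -/
theorem separated_part_common_parent (n : ℕ) (hn : 0 < n) (α : ℝ)
    (hα : α ∈ Set.Ioc (0 : ℝ) 1) (r : ℕ) (hr : 1 ≤ r) :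
    ∃ c : ℝ, 0 < c ∧
      ∀ (ω : ℤ → Fin n → Bool) (I J K : Cube n),
        I ∈ dyadicGrid ω → J ∈ dyadicGrid ω → K ∈ dyadicGrid ω →
        IsGood (dyadicGrid ω) r (α / (2 * (2 * (n : ℝ) + α))) K →
        K.side ≤ I.side → I.side = 2 * J.side →
        K.side ^ (α / (2 * (2 * (n : ℝ) + α))) *
            J.side ^ (1 - α / (2 * (2 * (n : ℝ) + α))) <
          max (cubeDist K I) (cubeDist K J) →
        ∃ Q ∈ dyadicGrid ω, I.set ∪ J.set ∪ K.set ⊆ Q.set ∧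
          c * (K.side ^ (α / (2 * (2 * (n : ℝ) + α))) *
              Q.side ^ (1 - α / (2 * (2 * (n : ℝ) + α)))) ≤
            max (cubeDist K I) (cubeDist K J) := by
  have hα0 := hα.1
  have hα1 := hα.2
  have hden : (0:ℝ) < 2 * (2 * (n:ℝ) + α) := by positivity
  set γ : ℝ := α / (2 * (2 * (n:ℝ) + α)) with hγdef
  have hγ0 : 0 < γ := div_pos hα0 hden
  have hγhalf : γ ≤ 1/2 := by
    rw [hγdef, div_le_iff₀ hden]
    nlinarith [Nat.cast_nonneg (α := ℝ) n]
  refine ⟨((2:ℝ)^(r+2))⁻¹, by positivity, ?_⟩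
  intro ω I J K hI hJ hK hgood hKI hIJ hsep
  set D := max (cubeDist K I) (cubeDist K J) with hD
  have hh0 : (0:ℝ) < K.side := K.side_pos
  have hJ0 : (0:ℝ) < J.side := J.side_pos
  have hI0 : (0:ℝ) < I.side := I.side_pos
  have hD0 : (0:ℝ) < D :=
    lt_trans (by positivity : (0:ℝ) < K.side ^ γ * J.side ^ (1-γ)) hsep
  have hsplit : K.side ^ γ * K.side ^ (1-γ) = K.side := by
    rw [← Real.rpow_add hh0]
    norm_num
  obtain ⟨f, hf0, hfmem, hfsub, hfside⟩ := exists_chain ω hK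
  have hKsub : ∀ m, K.set ⊆ (f m).set := by
    intro m
    induction m with
    | zero => rw [hf0]
    | succ m ih => exact ih.trans (hfsub m)
  -- the "h ≤ 2 ℓ(J)" bound
  have hhJ : K.side ≤ 2 * (K.side ^ γ * J.side ^ (1-γ)) := by
    have := rpow_fac hγ0.le (by linarith) hh0.le hh0.le hJ0.le (by norm_num : (1:ℝ) ≤ 2)
      (by rw [← hIJ]; exact hKI)
    rwa [hsplit] at this
  -- containment criterion for big ancestors
  have hcont : ∀ m, ((2:ℝ)^r * K.side ≤ (f m).side) → I.side ≤ (f m).side →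
      D < K.side ^ γ * (f m).side ^ (1-γ) →
      I.set ⊆ (f m).set ∧ J.set ⊆ (f m).set := by
    intro m hr' hIle hDlt
    have hJle : J.side ≤ (f m).side := le_trans (by linarith) hIle
    have hgd := hgood (f m) (hfmem m) hr'
    constructor
    · rcases subset_or_disjoint ω (hfmem m) hI hIle with hsub | hdis
      · exact hsub
      · exfalso
        have h1 : setDist K.clSet (frontier (f m).set) ≤ cubeDist K I :=
          frontier_dist_le_cubeDist (hKsub m) hdis
        have h2 : cubeDist K I ≤ D := le_max_left _ _
        linarith
    · rcases subset_or_disjoint ω (hfmem m) hJ hJle with hsub | hdis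
      · exact hsub
      · exfalso
        have h1 : setDist K.clSet (frontier (f m).set) ≤ cubeDist K J :=
          frontier_dist_le_cubeDist (hKsub m) hdis
        have h2 : cubeDist K J ≤ D := le_max_right _ _
        linarith
  -- existence of a containing ancestor
  have hex : ∃ m, I.set ⊆ (f m).set ∧ J.set ⊆ (f m).set := by
    set T : ℝ := max (D / K.side) 1 with hT
    obtain ⟨m, hm⟩ := exists_nat_gt (max (max (T^2) (I.side / K.side)) (r:ℝ))
    have hm2 : (m:ℝ) ≤ 2^m := by
      have := @Nat.lt_two_pow_self m
      exact_mod_cast this.le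
    have hmax1 : T^2 < 2^m := lt_of_le_of_lt (le_trans (le_max_left _ _) (le_max_left _ _))
      (lt_of_lt_of_le hm hm2)
    have hmax2 : I.side / K.side < 2^m := lt_of_le_of_lt
      (le_trans (le_max_right _ _) (le_max_left _ _)) (lt_of_lt_of_le hm hm2)
    have hmax3 : (r:ℝ) < m := lt_of_le_of_lt (le_max_right _ _) hm
    have hrm : r ≤ m := by exact_mod_cast hmax3.le
    refine ⟨m, hcont m ?_ ?_ ?_⟩
    · rw [hfside m]
      exact mul_le_mul_of_nonneg_right (pow_le_pow_right₀ (by norm_num) hrm) hh0.le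
    · rw [hfside m]
      rw [div_lt_iff₀ hh0] at hmax2
      exact hmax2.le
    · rw [hfside m]
      have h2m1 : (1:ℝ) ≤ 2^m := one_le_pow₀ (by norm_num)
      have heq : K.side ^ γ * ((2:ℝ)^m * K.side) ^ (1-γ) = ((2:ℝ)^m)^(1-γ) * K.side := by
        rw [Real.mul_rpow (by positivity) hh0.le,
          show K.side^γ * (((2:ℝ)^m)^(1-γ) * K.side^(1-γ))
            = ((2:ℝ)^m)^(1-γ) * (K.side^γ * K.side^(1-γ)) from by ring, hsplit]
      rw [heq]
      have h12 : ((2:ℝ)^m)^((1:ℝ)/2) ≤ ((2:ℝ)^m)^(1-γ) :=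
        Real.rpow_le_rpow_of_exponent_le h2m1 (by linarith)
      have hsq : Real.sqrt ((2:ℝ)^m) = ((2:ℝ)^m)^((1:ℝ)/2) := Real.sqrt_eq_rpow _
      have hTs : T < Real.sqrt ((2:ℝ)^m) := (Real.lt_sqrt (le_trans zero_le_one
        (le_max_right _ _))).2 hmax1
      have hDT : D / K.side ≤ T := le_max_left _ _
      have : D / K.side < ((2:ℝ)^m)^(1-γ) := by
        calc D / K.side ≤ T := hDT
          _ < Real.sqrt ((2:ℝ)^m) := hTs
          _ = ((2:ℝ)^m)^((1:ℝ)/2) := hsq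
          _ ≤ ((2:ℝ)^m)^(1-γ) := h12
      rw [div_lt_iff₀ hh0] at this
      linarith
  obtain ⟨m₀, ⟨hIQ, hJQ⟩, hmin⟩ :
      ∃ m, (I.set ⊆ (f m).set ∧ J.set ⊆ (f m).set) ∧
        ∀ k, k < m → ¬(I.set ⊆ (f k).set ∧ J.set ⊆ (f k).set) :=
    ⟨Nat.find hex, Nat.find_spec hex, fun k hk => Nat.find_min hex hk⟩
  have hm₀pos : 0 < m₀ := by
    rcases Nat.eq_zero_or_pos m₀ with h0 | h
    · exfalso
      have hI0' : I.set ⊆ K.set := by rw [← hf0, ← h0]; exact hIQ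
      have hJ0' : J.set ⊆ K.set := by rw [← hf0, ← h0]; exact hJQ
      have hcI : cubeDist K I ≤ 0 := by
        have := setDist_le_dist (set_subset_clSet K (hI0' (corner_mem_set I)))
          (corner_mem_clSet I)
        rwa [dist_self] at this
      have hcJ : cubeDist K J ≤ 0 := by
        have := setDist_le_dist (set_subset_clSet K (hJ0' (corner_mem_set J)))
          (corner_mem_clSet J)
        rwa [dist_self] at this
      have : D ≤ 0 := max_le hcI hcJ
      linarith
    · exact h
  set C := f (m₀ - 1) with hC
  have hQside : (f m₀).side = 2 * C.side := by
    rw [hC, hfside, hfside]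
    have h1 : m₀ = (m₀ - 1) + 1 := (Nat.succ_pred_eq_of_pos hm₀pos).symm
    conv_lhs => rw [h1, pow_succ]
    ring
  have hCpos : (0:ℝ) < C.side := C.side_pos
  have hQpos : (0:ℝ) < (f m₀).side := (f m₀).side_pos
  have hCmem : C ∈ dyadicGrid ω := hfmem _
  have hKC : K.set ⊆ C.set := hKsub _
  have hfail : ¬(I.set ⊆ C.set ∧ J.set ⊆ C.set) := hmin (m₀ - 1) (by omega)
  have h2r2 : (4:ℝ) ≤ 2^(r+2) := by
    calc (4:ℝ) = 2^2 := by norm_num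
      _ ≤ 2^(r+2) := pow_le_pow_right₀ (by norm_num) (by omega)
  have hsepJ : K.side ^ γ * J.side ^ (1-γ) < D := hsep
  -- main bound on h^γ ℓ(Q)^{1-γ}
  have key : K.side ^ γ * (f m₀).side ^ (1-γ) ≤ 2^(r+2) * D := by
    have hX2 : K.side ^ γ * (f m₀).side ^ (1-γ) ≤ 2 * (K.side^γ * C.side^(1-γ)) :=
      rpow_fac hγ0.le (by linarith) hh0.le hQpos.le hCpos.le (by norm_num) hQside.le
    -- far (good) case
    have goodcase : (2:ℝ)^r * K.side ≤ C.side → K.side^γ * C.side^(1-γ) < D →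
        K.side ^ γ * (f m₀).side ^ (1-γ) ≤ 2^(r+2) * D := by
      intro _ hDC
      have h4 : (2:ℝ) ≤ 2^(r+2) := by
        calc (2:ℝ) = 2^1 := (pow_one 2).symm
          _ ≤ 2^(r+2) := pow_le_pow_right₀ one_le_two (by omega)
      calc K.side ^ γ * (f m₀).side ^ (1-γ) ≤ 2 * (K.side^γ * C.side^(1-γ)) := hX2
        _ ≤ 2 * D := by linarith
        _ ≤ 2^(r+2) * D := mul_le_mul_of_nonneg_right h4 hD0.le
    -- case: C is small compared to 2^r K
    have smallr : ¬((2:ℝ)^r * K.side ≤ C.side) →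
        K.side ^ γ * (f m₀).side ^ (1-γ) ≤ 2^(r+2) * D := by
      intro hng
      push_neg at hng
      have h1 : K.side^γ * C.side^(1-γ) ≤ (2:ℝ)^r * (K.side^γ * K.side^(1-γ)) :=
        rpow_fac hγ0.le (by linarith) hh0.le hCpos.le hh0.le (one_le_pow₀ (by norm_num))
          hng.le
      rw [hsplit] at h1
      have h2 : K.side^γ * C.side^(1-γ) ≤ (2:ℝ)^r * (2 * (K.side^γ * J.side^(1-γ))) :=
        h1.trans (mul_le_mul_of_nonneg_left hhJ (by positivity))
      calc K.side ^ γ * (f m₀).side ^ (1-γ) ≤ 2 * (K.side^γ * C.side^(1-γ)) := hX2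
        _ ≤ 2 * ((2:ℝ)^r * (2 * (K.side^γ * J.side^(1-γ)))) := by linarith
        _ = 4 * ((2:ℝ)^r * (K.side^γ * J.side^(1-γ))) := by ring
        _ ≤ 4 * ((2:ℝ)^r * D) := by
            refine mul_le_mul_of_nonneg_left ?_ (by norm_num)
            exact mul_le_mul_of_nonneg_left hsepJ.le (by positivity)
        _ = 2^(r+2) * D := by ring
    -- case: C is smaller than I
    have smallI : C.side < I.side → K.side ^ γ * (f m₀).side ^ (1-γ) ≤ 2^(r+2) * D := by
      intro hsC
      have h4 : (f m₀).side ≤ 4 * J.side := by rw [hQside]; linarith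
      have h1 : K.side^γ * (f m₀).side^(1-γ) ≤ 4 * (K.side^γ * J.side^(1-γ)) :=
        rpow_fac hγ0.le (by linarith) hh0.le hQpos.le hJ0.le (by norm_num) h4
      calc K.side ^ γ * (f m₀).side ^ (1-γ) ≤ 4 * (K.side^γ * J.side^(1-γ)) := h1
        _ ≤ 4 * D := by linarith
        _ ≤ 2^(r+2) * D := mul_le_mul_of_nonneg_right h2r2 hD0.le
    by_cases hIC : I.set ⊆ C.set
    · have hJC : ¬ J.set ⊆ C.set := fun h => hfail ⟨hIC, h⟩
      by_cases hs : J.side ≤ C.side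
      · rcases subset_or_disjoint ω hCmem hJ hs with hsub | hdis
        · exact absurd hsub hJC
        by_cases hg : (2:ℝ)^r * K.side ≤ C.side
        · refine goodcase hg ?_
          have h2 := hgood C hCmem hg
          have h1 := frontier_dist_le_cubeDist hKC hdis
          have h3 : cubeDist K J ≤ D := le_max_right _ _
          linarith
        · exact smallr hg
      · push_neg at hs
        exact smallI (by linarith)
    · by_cases hs : I.side ≤ C.side
      · rcases subset_or_disjoint ω hCmem hI hs with hsub | hdis
        · exact absurd hsub hIC
        by_cases hg : (2:ℝ)^r * K.side ≤ C.side
        · refine goodcase hg ?_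
          have h2 := hgood C hCmem hg
          have h1 := frontier_dist_le_cubeDist hKC hdis
          have h3 : cubeDist K I ≤ D := le_max_left _ _
          linarith
        · exact smallr hg
      · push_neg at hs
        exact smallI hs
  refine ⟨f m₀, hfmem m₀, ?_, ?_⟩
  · exact Set.union_subset (Set.union_subset hIQ hJQ) (hKsub m₀)
  · have h2p : (0:ℝ) < 2^(r+2) := by positivity
    have := mul_le_mul_of_nonneg_left key (inv_nonneg.2 h2p.le)
    calc ((2:ℝ)^(r+2))⁻¹ * (K.side ^ γ * (f m₀).side ^ (1-γ))
        ≤ ((2:ℝ)^(r+2))⁻¹ * (2^(r+2) * D) := this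
      _ = D := by field_simp

end Bilinear
end
end

section
/- Let 𝒟 be a dyadic grid on ℝⁿ, let α ∈ (0,1], γ = α/(2(2n+α)), and fix an integer r ≥ 1. Let I, J ∈ 𝒟 and let K ∈ 𝒟 be good, with ℓ(K) ≤ ℓ(I) = 2ℓ(J), max(d(K,I), d(K,J)) ≤ ℓ(K)^γ ℓ(J)^{1−γ}, and suppose that K ∩ I = ∅ or K ∩ J = ∅. Then ℓ(I) ≤ 2^r ℓ(K). -/
open MeasureTheory Set
open scoped ENNReal NNReal Classical

noncomputable section

namespace Bilinear

section Aux

variable {n : ℕ}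

lemma Cube.set_eq_pi (Q : Cube n) :
    Q.set = Set.pi Set.univ (fun i => Set.Ico (Q.corner i) (Q.corner i + Q.side)) := by
  ext x; simp [Cube.set, Set.mem_pi]

lemma Cube.closure_set (Q : Cube n) : closure Q.set = Q.clSet := by
  rw [Cube.set_eq_pi, closure_pi_set]
  ext x
  simp only [Set.mem_pi, Set.mem_univ, forall_true_left, Function.comp]
  refine forall_congr' fun i => ?_
  rw [closure_Ico (lt_add_of_pos_right _ Q.side_pos).ne]
  simp [Set.mem_Icc]

lemma Cube.clSet_nonempty (Q : Cube n) : Q.clSet.Nonempty :=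
  ⟨Q.corner, fun i => ⟨le_refl _, le_add_of_nonneg_right Q.side_pos.le⟩⟩

/-- If a preconnected set meets `closure t` and misses `interior t` at some point, it meets
`frontier t` along the way. -/
lemma exists_frontier_mem_segment {p q : E n} {t : Set (E n)}
    (hp : p ∉ interior t) (hq : q ∈ closure t) :
    ∃ z ∈ frontier t, z ∈ segment ℝ p q := by
  by_cases hqi : q ∈ interior t
  · by_cases hpc : p ∈ closure t
    · exact ⟨p, ⟨hpc, hp⟩, left_mem_segment ℝ p q⟩
    · by_contra hcon
      push_neg at hcon
      have hseg : IsPreconnected (segment ℝ p q) := (convex_segment p q).isPreconnected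
      have hsub : segment ℝ p q ⊆ interior t ∪ (closure t)ᶜ := by
        intro x hx
        by_cases h1 : x ∈ interior t
        · exact Or.inl h1
        · by_cases h2 : x ∈ closure t
          · exact absurd hx (fun hx' => hcon x ⟨h2, h1⟩ hx')
          · exact Or.inr h2
      obtain ⟨x, hx⟩ := hseg (interior t) (closure t)ᶜ isOpen_interior
        isClosed_closure.isOpen_compl hsub
        ⟨q, right_mem_segment ℝ p q, hqi⟩ ⟨p, left_mem_segment ℝ p q, hpc⟩
      exact hx.2.2 (subset_closure (interior_subset hx.2.1))
  · exact ⟨q, ⟨hq, hqi⟩, right_mem_segment ℝ p q⟩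

lemma setDist_frontier_le {K J : Cube n} (hdisj : K.set ∩ J.set = ∅) :
    setDist K.clSet (frontier J.set) ≤ setDist K.clSet J.clSet := by
  have hbdd : ∀ s t : Set (E n), BddBelow (Set.image2 dist s t) := by
    intro s t
    refine ⟨0, ?_⟩
    rintro d ⟨p, hp, q, hq, rfl⟩
    exact dist_nonneg
  refine le_csInf ⟨_, Set.mem_image2_of_mem (K.clSet_nonempty.some_mem)
    (J.clSet_nonempty.some_mem)⟩ ?_
  rintro d ⟨p, hp, q, hq, rfl⟩
  -- `p ∉ interior J.set`
  have hpK : p ∈ closure K.set := K.closure_set ▸ hp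
  have hKsub : K.set ⊆ (J.set)ᶜ := by
    intro x hx hx'
    exact absurd hdisj (by
      apply Set.Nonempty.ne_empty
      exact ⟨x, hx, hx'⟩)
  have hpi : p ∉ interior J.set := by
    have : p ∈ closure (J.set)ᶜ := closure_mono hKsub hpK
    rwa [closure_compl, Set.mem_compl_iff] at this
  have hqc : q ∈ closure J.set := J.closure_set ▸ hq
  obtain ⟨z, hzf, hzs⟩ := exists_frontier_mem_segment hpi hqc
  have h1 : setDist K.clSet (frontier J.set) ≤ dist p z :=
    csInf_le (hbdd _ _) (Set.mem_image2_of_mem hp hzf)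
  have h2 : dist p z + dist z q = dist p q := dist_add_dist_of_mem_segment hzs
  have := dist_nonneg (x := z) (y := q)
  linarith

end Aux

/-- the diagonal part has bounded complexity: if `K` is a good cube,
`ℓ(K) ≤ ℓ(I) = 2ℓ(J)`, `max(d(K,I), d(K,J)) ≤ ℓ(K)^γ ℓ(J)^(1-γ)` with
`γ = α/(2(2n+α))`, and `K ∩ I = ∅` or `K ∩ J = ∅`, then `ℓ(I) ≤ 2^r ℓ(K)`. -/
theorem diagonal_part_bounded_complexity (n : ℕ) (hn : 0 < n) (α : ℝ)
    (hα : α ∈ Set.Ioc (0 : ℝ) 1) (r : ℕ) (hr : 1 ≤ r)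
    (ω : ℤ → Fin n → Bool) (I J K : Cube n)
    (hI : I ∈ dyadicGrid ω) (hJ : J ∈ dyadicGrid ω) (hK : K ∈ dyadicGrid ω)
    (hgood : IsGood (dyadicGrid ω) r (α / (2 * (2 * (n : ℝ) + α))) K)
    (h1 : K.side ≤ I.side) (h2 : I.side = 2 * J.side)
    (h3 : max (cubeDist K I) (cubeDist K J) ≤
      K.side ^ (α / (2 * (2 * (n : ℝ) + α))) *
        J.side ^ (1 - α / (2 * (2 * (n : ℝ) + α))))
    (h4 : K.set ∩ I.set = ∅ ∨ K.set ∩ J.set = ∅) :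
    I.side ≤ 2 ^ r * K.side := by
  by_contra hlt
  push_neg at hlt
  set γ : ℝ := α / (2 * (2 * (n : ℝ) + α)) with hγdef
  have hn1 : (1 : ℝ) ≤ n := by exact_mod_cast hn
  have hden : (0 : ℝ) < 2 * (2 * (n : ℝ) + α) := by nlinarith [hα.1]
  have hγ0 : 0 < γ := div_pos hα.1 hden
  have hγ1 : γ < 1 := by
    rw [hγdef, div_lt_one hden]; nlinarith [hα.1]
  have hKpos := K.side_pos
  have hJpos := J.side_pos
  have hJI : J.side ≤ I.side := by linarith [h2, hJpos]
  have hKγ : (0 : ℝ) ≤ K.side ^ γ := Real.rpow_nonneg hKpos.le γ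
  rcases h4 with hKI | hKJ
  · -- use goodness at `I`
    have hgI := hgood I hI hlt.le
    have hle : setDist K.clSet (frontier I.set) ≤ cubeDist K I := setDist_frontier_le hKI
    have hmax : cubeDist K I ≤ K.side ^ γ * J.side ^ (1 - γ) :=
      le_trans (le_max_left _ _) h3
    have hmono : K.side ^ γ * J.side ^ (1 - γ) ≤ K.side ^ γ * I.side ^ (1 - γ) :=
      mul_le_mul_of_nonneg_left (Real.rpow_le_rpow hJpos.le hJI (by linarith)) hKγ
    -- note `IsGood` uses `K.side ^ γ * I.side ^ (1-γ)` with `I` as the big cube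
    have : K.side ^ γ * I.side ^ (1 - γ) < setDist K.clSet (frontier I.set) := hgI
    have hcd : cubeDist K I = setDist K.clSet I.clSet := rfl
    rw [hcd] at hle hmax
    linarith
  · -- use goodness at `J`: need `2^r * K.side ≤ J.side`
    obtain ⟨k, mK, hKside, -⟩ := hK
    obtain ⟨m, mI, hIside, -⟩ := hI
    have h2r : (2 : ℝ) ^ r * K.side ≤ J.side := by
      have hlt' : (2 : ℝ) ^ ((r : ℤ) - k) < (2 : ℝ) ^ (-m) := by
        rw [zpow_sub₀ (two_ne_zero), zpow_natCast]
        rw [hKside] at hlt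
        rw [hIside] at hlt
        calc (2 : ℝ) ^ r / 2 ^ k = 2 ^ r * 2 ^ (-k) := by
              rw [zpow_neg]; ring
          _ < (2 : ℝ) ^ (-m) := hlt
      have hint : (r : ℤ) - k < -m := by
        rwa [zpow_lt_zpow_iff_right₀ (by norm_num : (1:ℝ) < 2)] at hlt'
      have hint' : (r : ℤ) - k ≤ -m - 1 := by omega
      have hle' : (2 : ℝ) ^ ((r : ℤ) - k) ≤ (2 : ℝ) ^ (-m - 1) :=
        zpow_le_zpow_right₀ one_le_two hint'
      have hJside : J.side = (2 : ℝ) ^ (-m - 1) := by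
        have : I.side = 2 * J.side := h2
        rw [hIside] at this
        have : J.side = (2 : ℝ) ^ (-m) / 2 := by linarith
        rw [this, zpow_sub₀ (two_ne_zero)]
        norm_num
      calc (2 : ℝ) ^ r * K.side = (2 : ℝ) ^ ((r : ℤ) - k) := by
            rw [hKside, zpow_sub₀ (two_ne_zero), zpow_natCast, zpow_neg, div_eq_mul_inv]
        _ ≤ (2 : ℝ) ^ (-m - 1) := hle'
        _ = J.side := hJside.symm
    have hgJ := hgood J hJ h2r
    have hle : setDist K.clSet (frontier J.set) ≤ cubeDist K J := setDist_frontier_le hKJ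
    have hmax : cubeDist K J ≤ K.side ^ γ * J.side ^ (1 - γ) :=
      le_trans (le_max_right _ _) h3
    have hcd : cubeDist K J = setDist K.clSet J.clSet := rfl
    rw [hcd] at hle hmax
    linarith

end Bilinear
end
end
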